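/- Let T be the free monad of the algebraic theory with one idempotent binary operation ∗ and one unary operation !, with no further equations. Then the equations !(step x) = x, (step x) ∗ y = step(x ∗ (!y)), x ∗ (step y) = step((!x) ∗ y) (together with the pointwise lifting on now-values) define a distributive law T∘D → D∘T over the coinductive delay monad D. -/

import Mathlib

/-- The coinductive delay monad: `D X` is the final coalgebra of `Y ↦ X ⊕ Y`.
Concretely, an element of `D X` either diverges (`none`), or is of the form
`step^n (now x)`, represented as `some (n, x)`. -/
def Delay (X : Type) : Type := Option (ℕ × X)

namespace Delay

/-- `now : X → D X`. -/
def now {X : Type} (x : X) : Delay X := some (0, x)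

/-- `step : D X → D X`. -/
def step {X : Type} : Delay X → Delay X
  | none => none
  | some (n, x) => some (n + 1, x)

/-- The divergent computation, `fix step`. -/
def diverge {X : Type} : Delay X := none

/-- Functorial action of `D`. -/
def map {X Y : Type} (f : X → Y) : Delay X → Delay Y
  | none => none
  | some (n, x) => some (n, f x)

/-- Monad multiplication `μ : D(D X) → D X`, satisfying `μ (now d) = d` and
`μ (step d) = step (μ d)`. -/
def mu {X : Type} : Delay (Delay X) → Delay X
  | none => none
  | some (_, none) => none
  | some (n, some (m, x)) => some (n + m, x)

end Delay

/-- Terms of the algebraic theory with one binary operation `∗` and one unary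
operation `!`. -/
inductive FreeTerm (X : Type) : Type
  | var : X → FreeTerm X
  | op : FreeTerm X → FreeTerm X → FreeTerm X
  | bang : FreeTerm X → FreeTerm X

/-- The congruence generated by idempotence `t ∗ t = t` (and no further equations). -/
inductive FreeRel (X : Type) : FreeTerm X → FreeTerm X → Prop
  | of_idem (t) : FreeRel X (.op t t) t
  | refl (t) : FreeRel X t t
  | symm {s t} : FreeRel X s t → FreeRel X t s
  | trans {s t u} : FreeRel X s t → FreeRel X t u → FreeRel X s u
  | op_congr {s s' t t'} : FreeRel X s s' → FreeRel X t t' →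
      FreeRel X (.op s t) (.op s' t')
  | bang_congr {s t} : FreeRel X s t → FreeRel X (.bang s) (.bang t)

/-- The free monad `T` of the theory with an idempotent binary operation `∗` and a unary
operation `!`. -/
def FreeT (X : Type) : Type := Quot (FreeRel X)

def FreeTerm.rename {X Y : Type} (f : X → Y) : FreeTerm X → FreeTerm Y
  | .var x => .var (f x)
  | .op s t => .op (rename f s) (rename f t)
  | .bang s => .bang (rename f s)

theorem FreeTerm.rename_rel {X Y : Type} (f : X → Y) {s t : FreeTerm X}
    (h : FreeRel X s t) : FreeRel Y (s.rename f) (t.rename f) := by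
  induction h with
  | of_idem t => exact .of_idem _
  | refl t => exact .refl _
  | symm _ ih => exact .symm ih
  | trans _ _ ih1 ih2 => exact .trans ih1 ih2
  | op_congr _ _ ih1 ih2 => exact .op_congr ih1 ih2
  | bang_congr _ ih => exact .bang_congr ih

namespace FreeT

/-- Unit of `T`. -/
def var {X : Type} (x : X) : FreeT X := Quot.mk _ (.var x)

/-- The binary operation `∗` of `T`. -/
def op {X : Type} : FreeT X → FreeT X → FreeT X :=
  Quot.map₂ FreeTerm.op (fun a _ _ h => FreeRel.op_congr (FreeRel.refl a) h)
    (fun _ _ b h => FreeRel.op_congr h (FreeRel.refl b))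

/-- The unary operation `!` of `T`. -/
def bang {X : Type} : FreeT X → FreeT X :=
  Quot.map FreeTerm.bang fun _ _ h => FreeRel.bang_congr h

/-- Functorial action of `T`. -/
def map {X Y : Type} (f : X → Y) : FreeT X → FreeT Y :=
  Quot.map (FreeTerm.rename f) fun _ _ h => FreeTerm.rename_rel f h

theorem op_idem {X : Type} (q : FreeT X) : op q q = q := by
  induction q using Quot.ind with
  | _ a => exact Quot.sound (FreeRel.of_idem a)

def joinAux {X : Type} : FreeTerm (FreeT X) → FreeT X
  | .var q => q
  | .op s t => op (joinAux s) (joinAux t)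
  | .bang s => bang (joinAux s)

theorem joinAux_rel {X : Type} {s t : FreeTerm (FreeT X)}
    (h : FreeRel (FreeT X) s t) : joinAux s = joinAux t := by
  induction h with
  | of_idem t => exact op_idem _
  | refl t => rfl
  | symm _ ih => exact ih.symm
  | trans _ _ ih1 ih2 => exact ih1.trans ih2
  | op_congr _ _ ih1 ih2 => show op _ _ = op _ _; rw [ih1, ih2]
  | bang_congr _ ih => show bang _ = bang _; rw [ih]

/-- Multiplication of `T`. -/
def mu {X : Type} : FreeT (FreeT X) → FreeT X :=
  Quot.lift joinAux fun _ _ h => joinAux_rel h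

end FreeT

namespace DLaw

open FreeT

/-- lifted `!` on `Delay (FreeT X)` -/
def DbangT {X : Type} : Delay (FreeT X) → Delay (FreeT X)
  | none => none
  | some (0, a) => some (0, FreeT.bang a)
  | some (n + 1, a) => some (n, a)

/-- lifted `∗` on `Delay (FreeT X)` -/
def DopT {X : Type} : Delay (FreeT X) → Delay (FreeT X) → Delay (FreeT X)
  | none, _ => none
  | some _, none => none
  | some (n, a), some (m, b) =>
      some (max n m, FreeT.op (FreeT.bang^[m - n] a) (FreeT.bang^[n - m] b))

theorem DopT_none_right {X : Type} (d : Delay (FreeT X)) : DopT d none = none := by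
  cases d with
  | none => rfl
  | some p => rfl

def evalZ {X : Type} : FreeTerm (Delay X) → Delay (FreeT X)
  | .var d => Delay.map FreeT.var d
  | .op s t => DopT (evalZ s) (evalZ t)
  | .bang s => DbangT (evalZ s)

theorem DopT_idem {X : Type} (d : Delay (FreeT X)) : DopT d d = d := by
  cases d with
  | none => rfl
  | some p =>
    obtain ⟨n, a⟩ := p
    simp [DopT, FreeT.op_idem]; rfl

theorem evalZ_rel {X : Type} {s t : FreeTerm (Delay X)} (h : FreeRel (Delay X) s t) :
    evalZ s = evalZ t := by
  induction h with
  | of_idem t => exact DopT_idem _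
  | refl t => rfl
  | symm _ ih => exact ih.symm
  | trans _ _ ih1 ih2 => exact ih1.trans ih2
  | op_congr _ _ ih1 ih2 => show DopT _ _ = DopT _ _; rw [ih1, ih2]
  | bang_congr _ ih => show DbangT _ = DbangT _; rw [ih]

def zeta (X : Type) : FreeT (Delay X) → Delay (FreeT X) :=
  Quot.lift evalZ fun _ _ h => evalZ_rel h

theorem zeta_var {X : Type} (d : Delay X) : zeta X (FreeT.var d) = Delay.map FreeT.var d := rfl

theorem zeta_op {X : Type} (a b : FreeT (Delay X)) :
    zeta X (FreeT.op a b) = DopT (zeta X a) (zeta X b) := by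
  induction a using Quot.ind with
  | _ u => induction b using Quot.ind with
    | _ v => rfl

theorem zeta_bang {X : Type} (a : FreeT (Delay X)) :
    zeta X (FreeT.bang a) = DbangT (zeta X a) := by
  induction a using Quot.ind with
  | _ u => rfl

theorem bang_map {X Y : Type} (f : X → Y) (a : FreeT X) :
    FreeT.map f (FreeT.bang a) = FreeT.bang (FreeT.map f a) := by
  induction a using Quot.ind with
  | _ u => rfl

theorem op_map {X Y : Type} (f : X → Y) (a b : FreeT X) :
    FreeT.map f (FreeT.op a b) = FreeT.op (FreeT.map f a) (FreeT.map f b) := by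
  induction a using Quot.ind with
  | _ u => induction b using Quot.ind with
    | _ v => rfl

theorem mu_var {X : Type} (a : FreeT X) : FreeT.mu (FreeT.var a) = a := rfl

theorem mu_bang {X : Type} (a : FreeT (FreeT X)) :
    FreeT.mu (FreeT.bang a) = FreeT.bang (FreeT.mu a) := by
  induction a using Quot.ind with
  | _ u => rfl

theorem mu_op {X : Type} (a b : FreeT (FreeT X)) :
    FreeT.mu (FreeT.op a b) = FreeT.op (FreeT.mu a) (FreeT.mu b) := by
  induction a using Quot.ind with
  | _ u => induction b using Quot.ind with
    | _ v => rfl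

/-- homomorphisms commute with `DopT` / `DbangT` -/
theorem map_DbangT {X Y : Type} (g : FreeT X → FreeT Y)
    (hbang : ∀ a, g (FreeT.bang a) = FreeT.bang (g a)) (d : Delay (FreeT X)) :
    Delay.map g (DbangT d) = DbangT (Delay.map g d) := by
  cases d with
  | none => rfl
  | some p =>
    obtain ⟨n, a⟩ := p
    cases n with
    | zero => simp [DbangT, Delay.map, hbang]; rfl
    | succ n => rfl

theorem map_bangIter {X Y : Type} (g : FreeT X → FreeT Y)
    (hbang : ∀ a, g (FreeT.bang a) = FreeT.bang (g a)) (k : ℕ) (a : FreeT X) :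
    g (FreeT.bang^[k] a) = FreeT.bang^[k] (g a) := by
  induction k generalizing a with
  | zero => rfl
  | succ k ih => rw [Function.iterate_succ_apply, Function.iterate_succ_apply, ih, hbang]

theorem map_DopT {X Y : Type} (g : FreeT X → FreeT Y)
    (hop : ∀ a b, g (FreeT.op a b) = FreeT.op (g a) (g b))
    (hbang : ∀ a, g (FreeT.bang a) = FreeT.bang (g a)) (d e : Delay (FreeT X)) :
    Delay.map g (DopT d e) = DopT (Delay.map g d) (Delay.map g e) := by
  cases d with
  | none => rfl
  | some p =>
    obtain ⟨n, a⟩ := p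
    cases e with
    | none => rfl
    | some q =>
      obtain ⟨m, b⟩ := q
      simp [DopT, Delay.map, hop, map_bangIter g hbang]; rfl

theorem zeta_natural {X Y : Type} (f : X → Y) (t : FreeT (Delay X)) :
    zeta Y (FreeT.map (Delay.map f) t) = Delay.map (FreeT.map f) (zeta X t) := by
  induction t using Quot.ind with
  | _ u =>
    induction u with
    | var d => cases d with
      | none => rfl
      | some p => rfl
    | op s t ihs iht =>
      show zeta Y (Quot.mk _ (FreeTerm.op _ _)) = _
      have hs : zeta Y (Quot.mk _ (s.rename (Delay.map f))) = _ := ihs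
      have := map_DopT (FreeT.map f) (op_map f) (bang_map f) (evalZ s) (evalZ t)
      show DopT (evalZ (s.rename (Delay.map f))) (evalZ (t.rename (Delay.map f)))
          = Delay.map (FreeT.map f) (DopT (evalZ s) (evalZ t))
      rw [this]; exact congrArg₂ _ ihs iht
    | bang s ihs =>
      show DbangT (evalZ (s.rename (Delay.map f)))
          = Delay.map (FreeT.map f) (DbangT (evalZ s))
      rw [map_DbangT (FreeT.map f) (bang_map f) (evalZ s)]
      exact congrArg _ ihs

theorem zeta_now {X : Type} (t : FreeT X) : zeta X (FreeT.map Delay.now t) = Delay.now t := by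
  induction t using Quot.ind with
  | _ u =>
    induction u with
    | var x => rfl
    | op s t ihs iht =>
      show DopT (evalZ (s.rename Delay.now)) (evalZ (t.rename Delay.now)) = _
      have ihs' : evalZ (s.rename Delay.now) = Delay.now (Quot.mk _ s) := ihs
      have iht' : evalZ (t.rename Delay.now) = Delay.now (Quot.mk _ t) := iht
      rw [ihs', iht']; rfl
    | bang s ihs =>
      show DbangT (evalZ (s.rename Delay.now)) = _
      have ihs' : evalZ (s.rename Delay.now) = Delay.now (Quot.mk _ s) := ihs
      rw [ihs']; rfl

theorem map_map {X Y Z : Type} (f : X → Y) (g : Y → Z) (d : Delay X) :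
    Delay.map g (Delay.map f d) = Delay.map (g ∘ f) d := by
  cases d with
  | none => rfl
  | some p => rfl

theorem map_id' {X : Type} (f : X → X) (hf : ∀ x, f x = x) (d : Delay X) :
    Delay.map f d = d := by
  cases d with
  | none => rfl
  | some p => simp [Delay.map, hf]; rfl

theorem zeta_muT {X : Type} (t : FreeT (FreeT (Delay X))) :
    zeta X (FreeT.mu t) = Delay.map FreeT.mu (zeta (FreeT X) (FreeT.map (zeta X) t)) := by
  induction t using Quot.ind with
  | _ u =>
    induction u with
    | var q =>
      show zeta X q = Delay.map FreeT.mu (Delay.map FreeT.var (zeta X q))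
      rw [map_map, map_id' (FreeT.mu ∘ FreeT.var) (fun x => rfl)]
    | op s t ihs iht =>
      show zeta X (FreeT.op (FreeT.mu (Quot.mk _ s)) (FreeT.mu (Quot.mk _ t))) = _
      rw [zeta_op]
      show _ = Delay.map FreeT.mu (DopT (evalZ (s.rename (zeta X))) (evalZ (t.rename (zeta X))))
      rw [map_DopT FreeT.mu mu_op mu_bang]
      exact congrArg₂ _ ihs iht
    | bang s ihs =>
      show zeta X (FreeT.bang (FreeT.mu (Quot.mk _ s))) = _
      rw [zeta_bang]
      show _ = Delay.map FreeT.mu (DbangT (evalZ (s.rename (zeta X))))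
      rw [map_DbangT FreeT.mu mu_bang]
      exact congrArg _ ihs

/- ---- μ^D law ---- -/

theorem DbangT_iterate_none {X : Type} (k : ℕ) : DbangT^[k] (none : Delay (FreeT X)) = none := by
  induction k with
  | zero => rfl
  | succ k ih => exact ih

theorem DbangT_iterate_some {X : Type} (k l : ℕ) (c : FreeT X) :
    DbangT^[k] (some (l, c) : Delay (FreeT X)) = some (l - k, FreeT.bang^[k - l] c) := by
  induction k generalizing l c with
  | zero => simp; rfl
  | succ k ih =>
    show DbangT^[k] (DbangT (some (l, c) : Delay (FreeT X))) = _
    cases l with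
    | zero =>
      show DbangT^[k] (some (0, FreeT.bang c)) = _
      rw [ih, ← Function.iterate_succ_apply]
      have h1 : (0 : ℕ) - k = 0 - (k + 1) := by omega
      have h2 : k - 0 + 1 = (k + 1) - 0 := by omega
      rw [h1]
      show some (0 - (k + 1), FreeT.bang^[k - 0 + 1] c) = _
      rw [h2]
    | succ l =>
      show DbangT^[k] (some (l, c)) = _
      rw [ih]
      have h1 : l - k = (l + 1) - (k + 1) := by omega
      have h2 : k - l = (k + 1) - (l + 1) := by omega
      rw [h1, h2]

theorem zeta_bangIter {X : Type} (k : ℕ) (a : FreeT (Delay X)) :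
    zeta X (FreeT.bang^[k] a) = DbangT^[k] (zeta X a) := by
  induction k generalizing a with
  | zero => rfl
  | succ k ih =>
    rw [Function.iterate_succ_apply, Function.iterate_succ_apply, ih, zeta_bang]

/-- shift key lemma -/
theorem DopT_mu_mu {X : Type} (n m : ℕ) (d e : Delay (FreeT X)) :
    DopT (Delay.mu (some (n, d))) (Delay.mu (some (m, e)))
      = Delay.mu (some (max n m, DopT (DbangT^[m - n] d) (DbangT^[n - m] e))) := by
  cases d with
  | none =>
    rw [DbangT_iterate_none]; rfl
  | some p =>
    obtain ⟨k, c⟩ := p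
    cases e with
    | none =>
      rw [DbangT_iterate_none, DbangT_iterate_some]
      rfl
    | some q =>
      obtain ⟨l, c'⟩ := q
      rw [DbangT_iterate_some, DbangT_iterate_some]
      show DopT (some (n + k, c)) (some (m + l, c')) = _
      show some (max (n + k) (m + l), FreeT.op (FreeT.bang^[(m + l) - (n + k)] c)
          (FreeT.bang^[(n + k) - (m + l)] c')) = _
      show _ = some (max n m + max (k - (m - n)) (l - (n - m)),
        FreeT.op (FreeT.bang^[(l - (n - m)) - (k - (m - n))] (FreeT.bang^[(m - n) - k] c))
          (FreeT.bang^[(k - (m - n)) - (l - (n - m))] (FreeT.bang^[(n - m) - l] c')))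
      rw [← Function.iterate_add_apply, ← Function.iterate_add_apply]
      have hA : max (n + k) (m + l) = max n m + max (k - (m - n)) (l - (n - m)) := by omega
      have hB : (m + l) - (n + k) = (l - (n - m)) - (k - (m - n)) + ((m - n) - k) := by omega
      have hC : (n + k) - (m + l) = (k - (m - n)) - (l - (n - m)) + ((n - m) - l) := by omega
      rw [hA, hB, hC]

theorem mu_map_zeta_DbangT {X : Type} (a : Delay (FreeT (Delay X))) :
    Delay.mu (Delay.map (zeta X) (DbangT a)) = DbangT (Delay.mu (Delay.map (zeta X) a)) := by
  cases a with
  | none => rfl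
  | some p =>
    obtain ⟨n, p⟩ := p
    cases n with
    | zero =>
      show Delay.mu (some (0, zeta X (FreeT.bang p))) = DbangT (Delay.mu (some (0, zeta X p)))
      rw [zeta_bang]
      cases hz : zeta X p with
      | none => rfl
      | some q =>
        obtain ⟨k, c⟩ := q
        cases k with
        | zero => show some (0 + 0, _) = DbangT (some (0 + 0, c)); rfl
        | succ k =>
          show some (0 + k, c) = DbangT (some (0 + (k + 1), c))
          simp [DbangT, Nat.zero_add]
    | succ n =>
      show Delay.mu (some (n, zeta X p)) = DbangT (Delay.mu (some (n + 1, zeta X p)))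
      cases zeta X p with
      | none => rfl
      | some q =>
        obtain ⟨k, c⟩ := q
        show some (n + k, c) = DbangT (some (n + 1 + k, c))
        have : n + 1 + k = (n + k) + 1 := by omega
        rw [this]
        rfl

theorem mu_map_zeta_DopT {X : Type} (a b : Delay (FreeT (Delay X))) :
    Delay.mu (Delay.map (zeta X) (DopT a b))
      = DopT (Delay.mu (Delay.map (zeta X) a)) (Delay.mu (Delay.map (zeta X) b)) := by
  cases a with
  | none => rfl
  | some p =>
    obtain ⟨n, p⟩ := p
    cases b with
    | none =>
      show (none : Delay (FreeT X)) = DopT (Delay.mu (Delay.map (zeta X) (some (n, p))))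
        (Delay.mu (Delay.map (zeta X) none))
      rw [show Delay.mu (Delay.map (zeta X) (none : Delay (FreeT (Delay X)))) = none from rfl,
        DopT_none_right]
    | some q =>
      obtain ⟨m, q⟩ := q
      show Delay.mu (some (max n m, zeta X (FreeT.op (FreeT.bang^[m - n] p) (FreeT.bang^[n - m] q))))
        = DopT (Delay.mu (some (n, zeta X p))) (Delay.mu (some (m, zeta X q)))
      rw [zeta_op, zeta_bangIter, zeta_bangIter, DopT_mu_mu]

theorem zeta_muD {X : Type} (t : FreeT (Delay (Delay X))) :
    zeta X (FreeT.map Delay.mu t) = Delay.mu (Delay.map (zeta X) (zeta (Delay X) t)) := by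
  induction t using Quot.ind with
  | _ u =>
    induction u with
    | var d =>
      show Delay.map FreeT.var (Delay.mu d)
        = Delay.mu (Delay.map (zeta X) (Delay.map FreeT.var d))
      cases d with
      | none => rfl
      | some p =>
        obtain ⟨n, d'⟩ := p
        show Delay.map FreeT.var (Delay.mu (some (n, d')))
          = Delay.mu (some (n, Delay.map FreeT.var d'))
        cases d' with
        | none => rfl
        | some q => rfl
    | op s t ihs iht =>
      show DopT (evalZ (s.rename Delay.mu)) (evalZ (t.rename Delay.mu))
        = Delay.mu (Delay.map (zeta X) (DopT (evalZ s) (evalZ t)))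
      rw [mu_map_zeta_DopT]
      exact congrArg₂ _ ihs iht
    | bang s ihs =>
      show DbangT (evalZ (s.rename Delay.mu))
        = Delay.mu (Delay.map (zeta X) (DbangT (evalZ s)))
      rw [mu_map_zeta_DbangT]
      exact congrArg _ ihs

end DLaw

namespace DLaw

theorem opD_eq {X : Type} (d e : Delay (FreeT X)) :
    Delay.map FreeT.mu (zeta (FreeT X) (FreeT.op (FreeT.var d) (FreeT.var e))) = DopT d e := by
  rw [zeta_op, zeta_var, zeta_var, map_DopT FreeT.mu mu_op mu_bang,
    map_map, map_map, map_id' (FreeT.mu ∘ FreeT.var) (fun x => rfl),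
    map_id' (FreeT.mu ∘ FreeT.var) (fun x => rfl)]

theorem bangD_eq {X : Type} (d : Delay (FreeT X)) :
    Delay.map FreeT.mu (zeta (FreeT X) (FreeT.bang (FreeT.var d))) = DbangT d := by
  rw [zeta_bang, zeta_var, map_DbangT FreeT.mu mu_bang, map_map,
    map_id' (FreeT.mu ∘ FreeT.var) (fun x => rfl)]

theorem DbangT_step {X : Type} (d : Delay (FreeT X)) : DbangT (Delay.step d) = d := by
  cases d with
  | none => rfl
  | some p => rfl

theorem DopT_step_left {X : Type} (d e : Delay (FreeT X)) :
    DopT (Delay.step d) e = Delay.step (DopT d (DbangT e)) := by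
  cases d with
  | none => rfl
  | some p =>
    obtain ⟨n, a⟩ := p
    cases e with
    | none => rfl
    | some q =>
      obtain ⟨m, b⟩ := q
      cases m with
      | zero =>
        show some (max (n + 1) 0, FreeT.op (FreeT.bang^[0 - (n + 1)] a) (FreeT.bang^[(n + 1) - 0] b))
          = Delay.step (some (max n 0, FreeT.op (FreeT.bang^[0 - n] a) (FreeT.bang^[n - 0] (FreeT.bang b))))
        rw [← Function.iterate_succ_apply]
        have h1 : max (n + 1) 0 = max n 0 + 1 := by omega
        have h2 : (0 : ℕ) - (n + 1) = 0 - n := by omega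
        have h3 : (n + 1) - 0 = n - 0 + 1 := by omega
        rw [h1, h2, h3]
        rfl
      | succ m =>
        show some (max (n + 1) (m + 1), FreeT.op (FreeT.bang^[(m + 1) - (n + 1)] a)
            (FreeT.bang^[(n + 1) - (m + 1)] b))
          = Delay.step (some (max n m, FreeT.op (FreeT.bang^[m - n] a) (FreeT.bang^[n - m] b)))
        have h1 : max (n + 1) (m + 1) = max n m + 1 := by omega
        have h2 : (m + 1) - (n + 1) = m - n := by omega
        have h3 : (n + 1) - (m + 1) = n - m := by omega
        rw [h1, h2, h3]
        rfl

theorem DopT_step_right {X : Type} (d e : Delay (FreeT X)) :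
    DopT d (Delay.step e) = Delay.step (DopT (DbangT d) e) := by
  cases e with
  | none =>
    rw [DopT_none_right]
    show DopT d none = _
    rw [DopT_none_right]; rfl
  | some q =>
    obtain ⟨m, b⟩ := q
    cases d with
    | none => rfl
    | some p =>
      obtain ⟨n, a⟩ := p
      cases n with
      | zero =>
        show some (max 0 (m + 1), FreeT.op (FreeT.bang^[(m + 1) - 0] a) (FreeT.bang^[0 - (m + 1)] b))
          = Delay.step (some (max 0 m, FreeT.op (FreeT.bang^[m - 0] (FreeT.bang a)) (FreeT.bang^[0 - m] b)))
        rw [← Function.iterate_succ_apply]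
        have h1 : max 0 (m + 1) = max 0 m + 1 := by omega
        have h2 : (m + 1) - 0 = m - 0 + 1 := by omega
        have h3 : (0 : ℕ) - (m + 1) = 0 - m := by omega
        rw [h1, h2, h3]
        rfl
      | succ n =>
        show some (max (n + 1) (m + 1), FreeT.op (FreeT.bang^[(m + 1) - (n + 1)] a)
            (FreeT.bang^[(n + 1) - (m + 1)] b))
          = Delay.step (some (max n m, FreeT.op (FreeT.bang^[m - n] a) (FreeT.bang^[n - m] b)))
        have h1 : max (n + 1) (m + 1) = max n m + 1 := by omega
        have h2 : (m + 1) - (n + 1) = m - n := by omega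
        have h3 : (n + 1) - (m + 1) = n - m := by omega
        rw [h1, h2, h3]
        rfl

end DLaw

/-- Let `T` be the free monad of the theory with one idempotent binary operation `∗` and
one unary operation `!` (no further equations). Then the equations `!(step x) = x`,
`(step x) ∗ y = step (x ∗ !y)`, `x ∗ (step y) = step ((!x) ∗ y)`, together with the
pointwise lifting on `now`-values, define a distributive law `T ∘ D → D ∘ T` over the
coinductive delay monad: there is a natural transformation `ζ : T(DX) → D(TX)` satisfying
the four distributive-law axioms whose induced lifting of the `T`-algebra structure to
`D(TX)` satisfies the above equations. -/
theorem idempotent_bang_distributive_law :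
    ∃ ζ : ∀ X : Type, FreeT (Delay X) → Delay (FreeT X),
      -- naturality
      (∀ (X Y : Type) (f : X → Y) (t : FreeT (Delay X)),
          ζ Y (FreeT.map (Delay.map f) t) = Delay.map (FreeT.map f) (ζ X t)) ∧
      -- ζ ∘ η^T D = D η^T
      (∀ (X : Type) (d : Delay X), ζ X (FreeT.var d) = Delay.map FreeT.var d) ∧
      -- ζ ∘ T η^D = η^D T
      (∀ (X : Type) (t : FreeT X), ζ X (FreeT.map Delay.now t) = Delay.now t) ∧
      -- ζ ∘ μ^T D = D μ^T ∘ ζ T ∘ T ζ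
      (∀ (X : Type) (t : FreeT (FreeT (Delay X))),
          ζ X (FreeT.mu t)
            = Delay.map FreeT.mu (ζ (FreeT X) (FreeT.map (ζ X) t))) ∧
      -- ζ ∘ T μ^D = μ^D T ∘ D ζ ∘ ζ D
      (∀ (X : Type) (t : FreeT (Delay (Delay X))),
          ζ X (FreeT.map Delay.mu t)
            = Delay.mu (Delay.map (ζ X) (ζ (Delay X) t))) ∧
      -- the induced lifting of the T-algebra structure to D(T X) satisfies the
      -- defining equations of the lifting
      (∀ X : Type,
        let opD : Delay (FreeT X) → Delay (FreeT X) → Delay (FreeT X) := fun d e =>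
          Delay.map FreeT.mu (ζ (FreeT X) (FreeT.op (FreeT.var d) (FreeT.var e)))
        let bangD : Delay (FreeT X) → Delay (FreeT X) := fun d =>
          Delay.map FreeT.mu (ζ (FreeT X) (FreeT.bang (FreeT.var d)))
        (∀ t : FreeT X, bangD (Delay.now t) = Delay.now (FreeT.bang t)) ∧
        (∀ d : Delay (FreeT X), bangD (Delay.step d) = d) ∧
        (∀ s t : FreeT X,
            opD (Delay.now s) (Delay.now t) = Delay.now (FreeT.op s t)) ∧
        (∀ d e : Delay (FreeT X),
            opD (Delay.step d) e = Delay.step (opD d (bangD e))) ∧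
        (∀ d e : Delay (FreeT X),
            opD d (Delay.step e) = Delay.step (opD (bangD d) e))) := by
  refine ⟨DLaw.zeta, fun X Y f t => DLaw.zeta_natural f t, fun X d => rfl,
    fun X t => DLaw.zeta_now t, fun X t => DLaw.zeta_muT t, fun X t => DLaw.zeta_muD t, ?_⟩
  intro X opD bangD
  have hop : ∀ d e, opD d e = DLaw.DopT d e := fun d e => DLaw.opD_eq d e
  have hbang : ∀ d, bangD d = DLaw.DbangT d := fun d => DLaw.bangD_eq d
  refine ⟨fun t => by rw [hbang]; rfl,
    fun d => by rw [hbang]; exact DLaw.DbangT_step d,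
    fun s t => by rw [hop]; rfl,
    fun d e => by rw [hop, hop, hbang]; exact DLaw.DopT_step_left d e,
    fun d e => by rw [hop, hop, hbang]; exact DLaw.DopT_step_right d e⟩
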